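/- Let Ȧ₁ and Ȧ₂ be densely defined closed symmetric operators with deficiency indices (1,1) on complex Hilbert spaces H₁ and H₂, let g±ᵏ ∈ ker((Ȧₖ)* ∓ i) be unit vectors, let α ∈ [0, π), and let Ȧ be the restriction of (Ȧ₁ ⊕ Ȧ₂)* to Dom(Ȧ₁) ⊕ Dom(Ȧ₂) ∔ span{(sin α g₊¹ − sin α g₋¹) ⊕ (cos α g₊² − cos α g₋²)}, with deficiency vectors G₊ = cos α g₊¹ − sin α g₊² and G₋ = cos α g₋¹ − sin α g₋². Let A₁, A₂ be self-adjoint extensions of Ȧ₁, Ȧ₂ with g₊ᵏ − g₋ᵏ ∈ Dom(Aₖ). Then G₊ − G₋ ∈ Dom(A₁ ⊕ A₂), and for every z with Im z > 0 the Weyl–Titchmarsh functions satisfy M(z) = cos²α · M₁(z) + sin²α · M₂(z), where M(z) = ⟨(( A₁⊕A₂)z + I)((A₁⊕A₂) − z)⁻¹ G₊, G₊⟩ and Mₖ(z) = ⟨(Aₖ z + I)(Aₖ − z)⁻¹ g₊ᵏ, g₊ᵏ⟩; equivalently, if u ∈ Dom(A₁⊕A₂) and uₖ ∈ Dom(Aₖ)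 are the unique solutions of ((A₁⊕A₂) − z)u = G₊ and (Aₖ − z)uₖ = g₊ᵏ, then M(z) = ⟨zG₊ + (1+z²)u, G₊⟩ and Mₖ(z) = ⟨z g₊ᵏ + (1+z²)uₖ, g₊ᵏ⟩. -/

import Mathlib

noncomputable section

open Complex

/-- The inner product, linear in the **first** argument (the convention of the paper). -/
def ip {H : Type*} [NormedAddCommGroup H] [InnerProductSpace ℂ H] (x y : H) : ℂ :=
  @inner ℂ H _ y x

variable {H H₁ H₂ : Type*}
  [NormedAddCommGroup H] [InnerProductSpace ℂ H] [CompleteSpace H]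
  [NormedAddCommGroup H₁] [InnerProductSpace ℂ H₁] [CompleteSpace H₁]
  [NormedAddCommGroup H₂] [InnerProductSpace ℂ H₂] [CompleteSpace H₂]

/-- The deficiency subspace `ker (T* - z)` of a densely defined operator `T`,
as a subset of the ambient space. -/
def defSet (T : H →ₗ.[ℂ] H) (z : ℂ) : Set H :=
  {g | ∃ hg : g ∈ T.adjoint.domain, T.adjoint ⟨g, hg⟩ = z • g}

/-- `g` is a nonzero vector spanning the deficiency subspace `ker (T* - z)`. -/
def SpansDefSet (T : H →ₗ.[ℂ] H) (z : ℂ) (g : H) : Prop :=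
  g ≠ 0 ∧ defSet T z = {h | ∃ c : ℂ, h = c • g}

/-- `T` has deficiency indices `(1,1)`. -/
def HasDefIndicesOneOne (T : H →ₗ.[ℂ] H) : Prop :=
  (∃ g, SpansDefSet T I g) ∧ (∃ g, SpansDefSet T (-I) g)

/-- A partially defined operator is symmetric. -/
def IsSymmetricOp (T : H →ₗ.[ℂ] H) : Prop :=
  ∀ x y : T.domain, ip (T x) (y : H) = ip (x : H) (T y)

/-- A partially defined operator is self-adjoint. -/
def IsSelfAdjointOp (T : H →ₗ.[ℂ] H) : Prop :=
  Dense (T.domain : Set H) ∧ T.adjoint = T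

/-- A partially defined operator is dissipative: `Im ⟨T x, x⟩ ≥ 0`. -/
def IsDissipativeOp (T : H →ₗ.[ℂ] H) : Prop :=
  ∀ x : T.domain, 0 ≤ (ip (T x) (x : H)).im

/-- A partially defined operator is maximal dissipative: it is dissipative and admits no proper
dissipative extension. -/
def IsMaximalDissipativeOp (T : H →ₗ.[ℂ] H) : Prop :=
  IsDissipativeOp T ∧ ∀ S : H →ₗ.[ℂ] H, IsDissipativeOp S → T ≤ S → S = T

/-- The domain of the direct (orthogonal) sum of two partially defined operators. -/
def prodDomain (T₁ : H₁ →ₗ.[ℂ] H₁) (T₂ : H₂ →ₗ.[ℂ] H₂) :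
    Submodule ℂ (WithLp 2 (H₁ × H₂)) where
  carrier := {x | x.fst ∈ T₁.domain ∧ x.snd ∈ T₂.domain}
  add_mem' := fun ha hb => ⟨Submodule.add_mem _ ha.1 hb.1, Submodule.add_mem _ ha.2 hb.2⟩
  zero_mem' := ⟨Submodule.zero_mem _, Submodule.zero_mem _⟩
  smul_mem' := fun c x hx => ⟨Submodule.smul_mem _ c hx.1, Submodule.smul_mem _ c hx.2⟩

/-- First-component projection of the domain of a direct sum. -/
def fstD (T₁ : H₁ →ₗ.[ℂ] H₁) (T₂ : H₂ →ₗ.[ℂ] H₂) :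
    ↥(prodDomain T₁ T₂) →ₗ[ℂ] T₁.domain where
  toFun x := ⟨x.val.fst, x.prop.1⟩
  map_add' _ _ := rfl
  map_smul' _ _ := rfl

/-- Second-component projection of the domain of a direct sum. -/
def sndD (T₁ : H₁ →ₗ.[ℂ] H₁) (T₂ : H₂ →ₗ.[ℂ] H₂) :
    ↥(prodDomain T₁ T₂) →ₗ[ℂ] T₂.domain where
  toFun x := ⟨x.val.snd, x.prop.2⟩
  map_add' _ _ := rfl
  map_smul' _ _ := rfl

/-- The direct (orthogonal) sum `T₁ ⊕ T₂` of two partially defined operators, acting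
componentwise on `Dom T₁ ⊕ Dom T₂ ⊆ H₁ ⊕ H₂`. -/
def prodOp (T₁ : H₁ →ₗ.[ℂ] H₁) (T₂ : H₂ →ₗ.[ℂ] H₂) :
    WithLp 2 (H₁ × H₂) →ₗ.[ℂ] WithLp 2 (H₁ × H₂) where
  domain := prodDomain T₁ T₂
  toFun := (WithLp.linearEquiv 2 ℂ (H₁ × H₂)).symm.toLinearMap ∘ₗ
    ((T₁.toFun ∘ₗ fstD T₁ T₂).prod (T₂.toFun ∘ₗ sndD T₁ T₂))

/-- The canonical embedding of `H₁` into `H₁ ⊕ H₂`. -/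
def embFst (x : H₁) : WithLp 2 (H₁ × H₂) := (WithLp.equiv 2 (H₁ × H₂)).symm (x, 0)

/-- Builds an element of `H₁ ⊕ H₂` from components. -/
def pairL2 (x : H₁) (y : H₂) : WithLp 2 (H₁ × H₂) := (WithLp.equiv 2 (H₁ × H₂)).symm (x, y)


lemma selfAdj_symm {H : Type*} [NormedAddCommGroup H] [InnerProductSpace ℂ H] [CompleteSpace H]
    (A : H →ₗ.[ℂ] H) (h : IsSelfAdjointOp A) (x y : A.domain) :
    (inner ℂ (A x : H) (y : H) : ℂ) = inner ℂ (x : H) (A y : H) := by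
  have hfa := LinearPMap.adjoint_isFormalAdjoint (T := A) h.1
  rw [h.2] at hfa
  exact hfa x y

lemma prodOp_apply' {H₁ H₂ : Type*}
    [NormedAddCommGroup H₁] [InnerProductSpace ℂ H₁]
    [NormedAddCommGroup H₂] [InnerProductSpace ℂ H₂]
    (T₁ : H₁ →ₗ.[ℂ] H₁) (T₂ : H₂ →ₗ.[ℂ] H₂) (x : ↥(prodDomain T₁ T₂)) :
    prodOp T₁ T₂ x = pairL2 (T₁ ⟨x.val.fst, x.prop.1⟩) (T₂ ⟨x.val.snd, x.prop.2⟩) := rfl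

/-- **the Addition Theorem.** With `β = α`, the Weyl–Titchmarsh function of the
pair `(Ȧ, A₁ ⊕ A₂)` is the convex combination `M = cos²α M₁ + sin²α M₂`, where the
Weyl–Titchmarsh values are expressed via the solutions of the resolvent equations. -/
theorem statement4
    (B₁ : H₁ →ₗ.[ℂ] H₁) (B₂ : H₂ →ₗ.[ℂ] H₂)
    (hd₁ : Dense (B₁.domain : Set H₁)) (hd₂ : Dense (B₂.domain : Set H₂))
    (hc₁ : B₁.IsClosed) (hc₂ : B₂.IsClosed)
    (hs₁ : IsSymmetricOp B₁) (hs₂ : IsSymmetricOp B₂)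
    (hi₁ : HasDefIndicesOneOne B₁) (hi₂ : HasDefIndicesOneOne B₂)
    (gp₁ gm₁ : H₁) (gp₂ gm₂ : H₂)
    (hgp₁ : gp₁ ∈ defSet B₁ Complex.I) (hgm₁ : gm₁ ∈ defSet B₁ (-Complex.I))
    (hgp₂ : gp₂ ∈ defSet B₂ Complex.I) (hgm₂ : gm₂ ∈ defSet B₂ (-Complex.I))
    (hnp₁ : ‖gp₁‖ = 1) (hnm₁ : ‖gm₁‖ = 1) (hnp₂ : ‖gp₂‖ = 1) (hnm₂ : ‖gm₂‖ = 1)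
    (α : ℝ) (hα : α ∈ Set.Ico 0 Real.pi)
    (f : WithLp 2 (H₁ × H₂))
    (hf : f = pairL2 ((Real.sin α : ℂ) • gp₁ - (Real.sin α : ℂ) • gm₁)
      ((Real.cos α : ℂ) • gp₂ - (Real.cos α : ℂ) • gm₂))
    (A : WithLp 2 (H₁ × H₂) →ₗ.[ℂ] WithLp 2 (H₁ × H₂))
    (hA : A = ((prodOp B₁ B₂).adjoint).domRestrict
      (prodDomain B₁ B₂ ⊔ Submodule.span ℂ {f}))
    (Gp Gm : WithLp 2 (H₁ × H₂))
    (hGp : Gp = pairL2 ((Real.cos α : ℂ) • gp₁) (-(Real.sin α : ℂ) • gp₂))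
    (hGm : Gm = pairL2 ((Real.cos α : ℂ) • gm₁) (-(Real.sin α : ℂ) • gm₂))
    -- the self-adjoint reference extensions
    (A₁ : H₁ →ₗ.[ℂ] H₁) (A₂ : H₂ →ₗ.[ℂ] H₂)
    (hsa₁ : IsSelfAdjointOp A₁) (hsa₂ : IsSelfAdjointOp A₂)
    (hext₁ : B₁ ≤ A₁) (hext₂ : B₂ ≤ A₂)
    (hdom₁ : gp₁ - gm₁ ∈ A₁.domain) (hdom₂ : gp₂ - gm₂ ∈ A₂.domain) :
    Gp - Gm ∈ (prodOp A₁ A₂).domain ∧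
    ∀ z : ℂ, 0 < z.im →
      ∀ (u : WithLp 2 (H₁ × H₂)) (hu : u ∈ (prodOp A₁ A₂).domain)
        (u₁ : H₁) (hu₁ : u₁ ∈ A₁.domain) (u₂ : H₂) (hu₂ : u₂ ∈ A₂.domain),
        (prodOp A₁ A₂) ⟨u, hu⟩ - z • u = Gp →
        A₁ ⟨u₁, hu₁⟩ - z • u₁ = gp₁ →
        A₂ ⟨u₂, hu₂⟩ - z • u₂ = gp₂ →
        ip (z • Gp + (1 + z ^ 2) • u) Gp =
          (Real.cos α : ℂ) ^ 2 * ip (z • gp₁ + (1 + z ^ 2) • u₁) gp₁ +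
          (Real.sin α : ℂ) ^ 2 * ip (z • gp₂ + (1 + z ^ 2) • u₂) gp₂ := by
  subst hGp hGm
  have hc : ((starRingEnd ℂ) ((Real.cos α : ℝ) : ℂ)) = (Real.cos α : ℂ) := Complex.conj_ofReal _
  have hs : ((starRingEnd ℂ) ((Real.sin α : ℝ) : ℂ)) = (Real.sin α : ℂ) := Complex.conj_ofReal _
  constructor
  · refine ⟨?_, ?_⟩
    · show (Real.cos α : ℂ) • gp₁ - (Real.cos α : ℂ) • gm₁ ∈ A₁.domain
      rw [← smul_sub]
      exact A₁.domain.smul_mem _ hdom₁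
    · show (-(Real.sin α : ℂ)) • gp₂ - (-(Real.sin α : ℂ)) • gm₂ ∈ A₂.domain
      rw [← smul_sub]
      exact A₂.domain.smul_mem _ hdom₂
  · intro z hz u hu u₁ hu₁ u₂ hu₂ hU h1 h2
    set c : ℂ := (Real.cos α : ℂ) with hcdef
    set s : ℂ := (Real.sin α : ℂ) with hsdef
    set v : WithLp 2 (H₁ × H₂) := pairL2 (c • u₁) ((-s) • u₂) with hvdef
    have hv₁ : c • u₁ ∈ A₁.domain := A₁.domain.smul_mem c hu₁
    have hv₂ : (-s) • u₂ ∈ A₂.domain := A₂.domain.smul_mem (-s) hu₂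
    have hvmem : v ∈ (prodOp A₁ A₂).domain := ⟨hv₁, hv₂⟩
    -- v solves the resolvent equation
    have hV : (prodOp A₁ A₂) ⟨v, hvmem⟩ - z • v =
        pairL2 (c • gp₁) ((-s) • gp₂) := by
      erw [prodOp_apply']
      have e1 : A₁ ⟨c • u₁, hv₁⟩ = c • A₁ ⟨u₁, hu₁⟩ := by
        rw [show (⟨c • u₁, hv₁⟩ : A₁.domain) = c • ⟨u₁, hu₁⟩ from rfl, A₁.map_smul]
      have e2 : A₂ ⟨(-s) • u₂, hv₂⟩ = (-s) • A₂ ⟨u₂, hu₂⟩ := by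
        rw [show (⟨(-s) • u₂, hv₂⟩ : A₂.domain) = (-s) • ⟨u₂, hu₂⟩ from rfl, A₂.map_smul]
      show pairL2 (A₁ ⟨c • u₁, hv₁⟩ - z • (c • u₁)) (A₂ ⟨(-s) • u₂, hv₂⟩ - z • ((-s) • u₂)) = _
      rw [e1, e2, smul_comm z c u₁, smul_comm z (-s) u₂, ← smul_sub, ← smul_sub, h1, h2]
    -- w = u - v solves (A - z) w = 0
    have hwmem : u - v ∈ (prodOp A₁ A₂).domain := Submodule.sub_mem _ hu hvmem
    have hW : (prodOp A₁ A₂) ⟨u - v, hwmem⟩ = z • (u - v) := by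
      have : (prodOp A₁ A₂) ⟨u - v, hwmem⟩ =
          (prodOp A₁ A₂) ⟨u, hu⟩ - (prodOp A₁ A₂) ⟨v, hvmem⟩ := by
        rw [show (⟨u - v, hwmem⟩ : ↥(prodOp A₁ A₂).domain) = ⟨u, hu⟩ - ⟨v, hvmem⟩ from rfl]
        exact (prodOp A₁ A₂).map_sub _ _
      rw [this, smul_sub]
      have := sub_eq_sub_iff_sub_eq_sub.mp (hU.trans hV.symm)
      linear_combination (norm := abel) this
    -- symmetry forces w = 0
    set w : WithLp 2 (H₁ × H₂) := u - v with hwdef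
    have key : (inner ℂ w ((prodOp A₁ A₂) ⟨w, hwmem⟩) : ℂ) =
        inner ℂ w.fst (A₁ ⟨w.fst, hwmem.1⟩ : H₁) + inner ℂ w.snd (A₂ ⟨w.snd, hwmem.2⟩ : H₂) := rfl
    have r1 : (inner ℂ w.fst (A₁ ⟨w.fst, hwmem.1⟩ : H₁) : ℂ).im = 0 := by
      rw [← Complex.conj_eq_iff_im, inner_conj_symm,
        selfAdj_symm A₁ hsa₁ ⟨w.fst, hwmem.1⟩ ⟨w.fst, hwmem.1⟩]
    have r2 : (inner ℂ w.snd (A₂ ⟨w.snd, hwmem.2⟩ : H₂) : ℂ).im = 0 := by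
      rw [← Complex.conj_eq_iff_im, inner_conj_symm,
        selfAdj_symm A₂ hsa₂ ⟨w.snd, hwmem.2⟩ ⟨w.snd, hwmem.2⟩]
    have him : (inner ℂ w ((prodOp A₁ A₂) ⟨w, hwmem⟩) : ℂ).im = 0 := by
      rw [key]; rw [Complex.add_im, r1, r2, add_zero]
    have hznorm : ((inner ℂ w ((prodOp A₁ A₂) ⟨w, hwmem⟩) : ℂ)).im = z.im * ‖w‖ ^ 2 := by
      rw [hW, inner_smul_right, inner_self_eq_norm_sq_to_K]
      simp [Complex.mul_im, ← Complex.ofReal_pow]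
    have hwz : w = 0 := by
      rw [him] at hznorm
      have : ‖w‖ ^ 2 = 0 := by
        rcases mul_eq_zero.mp hznorm.symm with h | h
        · exact absurd h (ne_of_gt hz)
        · exact h
      simpa using (pow_eq_zero_iff (two_ne_zero)).mp this
    have huv : u = v := by rwa [hwdef, sub_eq_zero] at hwz
    subst huv
    -- final computation
    have hcomb : z • pairL2 (c • gp₁) ((-s) • gp₂) + (1 + z ^ 2) • v =
        pairL2 (c • (z • gp₁ + (1 + z ^ 2) • u₁)) ((-s) • (z • gp₂ + (1 + z ^ 2) • u₂)) := by
      show pairL2 (z • (c • gp₁) + (1 + z ^ 2) • (c • u₁))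
          (z • ((-s) • gp₂) + (1 + z ^ 2) • ((-s) • u₂)) = _
      refine congrArg₂ pairL2 ?_ ?_ <;> module
    simp only [ip]
    rw [hcomb]
    simp only [WithLp.prod_inner_apply, pairL2, WithLp.equiv_symm_apply, WithLp.ofLp_toLp,
      inner_smul_left, inner_smul_right, map_neg, hc, hs]
    ring
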